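/- The complete Bell polynomials satisfy, for every n ≥ 1, the differential recurrence in ℚ[x_1, x_2, x_3, …]: n·B_{n+1} = Σ_{i≥2} Σ_{j=1}^{i-1} ((i-1)!/((j-1)!·(i-j-1)!))·x_j·x_{i-j}·∂B_n/∂x_{i-1} + Σ_{i≥2} Σ_{j=1}^{i-1} (j!·(i-j)!/i!)·x_{i+1}·∂²B_n/∂x_j ∂x_{i-j} + Σ_{i≥2} x_i·∂B_n/∂x_{i-1}, where in each sum only finitely many terms are nonzero (every term with i > n+1 vanishes). -/

import Mathlib

open MvPolynomial

/-- The `n`-th complete Bell polynomial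
`Bₙ = Σ_{c : L(c)=n} (n!/∏ᵢ cᵢ!) · ∏ᵢ (xᵢ/i!)^{cᵢ}`, an element of `ℚ[x₁, x₂, …]`
(the variable `X i` is `xᵢ`); the finitely supported sequences `c` with `L(c) = n` are
identified with partitions of `n` (with `cᵢ` the multiplicity of the part `i`). -/
noncomputable def BellPoly (n : ℕ) : MvPolynomial ℕ ℚ :=
  ∑ p : Nat.Partition n,
    C ((n.factorial : ℚ) /
        ∏ ℓ ∈ Finset.Icc 1 n,
          (((Multiset.count ℓ p.parts).factorial : ℚ) *
            ((ℓ.factorial : ℚ)) ^ (Multiset.count ℓ p.parts))) *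
      ∏ ℓ ∈ Finset.Icc 1 n, X ℓ ^ (Multiset.count ℓ p.parts)

namespace BellAux

/-- product of `c!·(ℓ!)^c` over a finset -/
noncomputable def P (s : Finset ℕ) (r : Multiset ℕ) : ℚ :=
  ∏ ℓ ∈ s, (((Multiset.count ℓ r).factorial : ℚ) * ((ℓ.factorial : ℚ)) ^ (Multiset.count ℓ r))

lemma P_pos (s : Finset ℕ) (r : Multiset ℕ) : 0 < P s r := by
  apply Finset.prod_pos
  intro ℓ _
  positivity

lemma P_ne_zero (s : Finset ℕ) (r : Multiset ℕ) : P s r ≠ 0 := (P_pos s r).ne'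

noncomputable def bc (n : ℕ) (p : Nat.Partition n) : ℚ :=
  (n.factorial : ℚ) / P (Finset.Icc 1 n) p.parts

lemma mem_Icc_of_mem_parts {n : ℕ} {p : Nat.Partition n} {l : ℕ} (hl : l ∈ p.parts) :
    l ∈ Finset.Icc 1 n := by
  rw [Finset.mem_Icc]
  refine ⟨p.parts_pos hl, ?_⟩
  calc l ≤ p.parts.sum := Multiset.le_sum_of_mem hl
  _ = n := p.parts_sum

lemma count_eq_zero_of_not_mem_Icc {n : ℕ} {p : Nat.Partition n} {l : ℕ}
    (hl : l ∉ Finset.Icc 1 n) : Multiset.count l p.parts = 0 :=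
  Multiset.count_eq_zero.2 fun h => hl (mem_Icc_of_mem_parts h)

lemma bell_eq (n : ℕ) :
    BellPoly n = ∑ p : Nat.Partition n,
      monomial (Multiset.toFinsupp p.parts) (bc n p) := by
  unfold BellPoly
  refine Finset.sum_congr rfl fun p _ => ?_
  rw [show (∏ ℓ ∈ Finset.Icc 1 n, (X ℓ : MvPolynomial ℕ ℚ) ^ (Multiset.count ℓ p.parts))
      = monomial (Multiset.toFinsupp p.parts) (1:ℚ) from ?_, C_mul_monomial, mul_one]
  · rfl
  · rw [monomial_eq, C_1, one_mul, Finsupp.prod]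
    rw [Multiset.toFinsupp_support]
    refine (Finset.prod_subset (fun x hx => ?_) (fun x _ hx => ?_)).symm
    · exact mem_Icc_of_mem_parts (Multiset.mem_toFinset.1 hx)
    · rw [Multiset.mem_toFinset] at hx
      simp [Multiset.toFinsupp_apply, Multiset.count_eq_zero.2 hx]

lemma P_subset {s t : Finset ℕ} (r : Multiset ℕ) (hst : s ⊆ t)
    (hr : ∀ l ∈ r, l ∈ s) : P t r = P s r := by
  unfold P
  refine (Finset.prod_subset hst fun x _ hx => ?_).symm
  have : Multiset.count x r = 0 := Multiset.count_eq_zero.2 fun h => hx (hr x h)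
  simp [this]

lemma P_cons {s : Finset ℕ} {m : ℕ} (hm : m ∈ s) (r : Multiset ℕ) :
    P s (m ::ₘ r) = ((Multiset.count m r + 1 : ℕ) * (m.factorial : ℚ)) * P s r := by
  unfold P
  rw [← Finset.mul_prod_erase s _ hm, ← Finset.mul_prod_erase s _ hm]
  have h1 : ∀ x ∈ s.erase m,
      (((Multiset.count x (m ::ₘ r)).factorial : ℚ) * ((x.factorial : ℚ)) ^ (Multiset.count x (m ::ₘ r)))
      = (((Multiset.count x r).factorial : ℚ) * ((x.factorial : ℚ)) ^ (Multiset.count x r)) := by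
    intro x hx
    rw [Multiset.count_cons_of_ne (Finset.ne_of_mem_erase hx) r]
  rw [Finset.prod_congr rfl h1, Multiset.count_cons_self]
  rw [Nat.factorial_succ]
  push_cast
  ring

lemma pderiv_bell_of_not_mem {n m : ℕ} (hm : m ∉ Finset.Icc 1 n) :
    pderiv m (BellPoly n) = 0 := by
  rw [bell_eq, map_sum]
  refine Finset.sum_eq_zero fun p _ => ?_
  rw [pderiv_monomial]
  have : (Multiset.toFinsupp p.parts) m = 0 := count_eq_zero_of_not_mem_Icc hm
  simp [this]

lemma pderiv_bell {n m : ℕ} (hm : m ∈ Finset.Icc 1 n) :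
    pderiv m (BellPoly n) = C ((n.choose m : ℚ)) * BellPoly (n - m) := by
  obtain ⟨hm1, hmn⟩ := Finset.mem_Icc.1 hm
  rw [bell_eq n, bell_eq (n - m), map_sum, Finset.mul_sum]
  simp only [pderiv_monomial, C_mul_monomial]
  rw [← Finset.sum_filter_add_sum_filter_not Finset.univ (fun p : Nat.Partition n => m ∈ p.parts)]
  rw [show (∑ p ∈ Finset.univ.filter (fun p : Nat.Partition n => m ∉ p.parts),
      monomial (Multiset.toFinsupp p.parts - Finsupp.single m 1)
        (bc n p * ((Multiset.toFinsupp p.parts) m : ℚ))) = 0 from ?_, add_zero]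
  · refine Finset.sum_bij'
      (fun p hp => ⟨p.parts.erase m, ?_, ?_⟩ : ∀ p ∈ Finset.univ.filter
          (fun p : Nat.Partition n => m ∈ p.parts), Nat.Partition (n - m))
      (fun q _ => ⟨m ::ₘ q.parts, ?_, ?_⟩) (fun p hp => Finset.mem_univ _)
      (fun q hq => ?_) (fun p hp => ?_) (fun q hq => ?_) (fun p hp => ?_)
    · intro i hi
      exact p.parts_pos (Multiset.mem_of_mem_erase hi)
    · have hmem : m ∈ p.parts := (Finset.mem_filter.1 hp).2
      have := p.parts_sum
      have hcons := Multiset.cons_erase hmem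
      have : m + (p.parts.erase m).sum = n := by
        rw [← Multiset.sum_cons, hcons, p.parts_sum]
      omega
    · intro i hi
      rcases Multiset.mem_cons.1 hi with rfl | hi
      · exact hm1
      · exact q.parts_pos hi
    · rw [Multiset.sum_cons, q.parts_sum]
      omega
    · -- membership of j q in filter
      simp only [Finset.mem_filter, Finset.mem_univ, true_and]
      exact Multiset.mem_cons_self m _
    · -- left inverse
      have hmem : m ∈ p.parts := (Finset.mem_filter.1 hp).2
      exact Nat.Partition.ext (Multiset.cons_erase hmem)
    · -- right inverse
      exact Nat.Partition.ext (Multiset.erase_cons_head m _)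
    · -- main value equality
      have hmem : m ∈ p.parts := (Finset.mem_filter.1 hp).2
      set r := p.parts.erase m with hr
      have hcons : m ::ₘ r = p.parts := Multiset.cons_erase hmem
      have hexp : Multiset.toFinsupp p.parts - Finsupp.single m 1 = Multiset.toFinsupp r := by
        rw [← hcons, show m ::ₘ r = {m} + r from rfl, Multiset.toFinsupp_add,
          Multiset.toFinsupp_singleton, add_tsub_cancel_left]
      rw [hexp]
      congr 1
      -- coefficient identity
      have hcount : ((Multiset.toFinsupp p.parts) m : ℕ) = Multiset.count m r + 1 := by
        rw [Multiset.toFinsupp_apply, ← hcons, Multiset.count_cons_self]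
      have hrsub : ∀ l ∈ r, l ∈ Finset.Icc 1 (n - m) := by
        intro l hl
        have h1 : 0 < l := p.parts_pos (Multiset.mem_of_mem_erase hl)
        have h2 : l ≤ r.sum := Multiset.le_sum_of_mem hl
        have hsum : m + r.sum = n := by
          rw [← Multiset.sum_cons, hcons, p.parts_sum]
        rw [Finset.mem_Icc]; omega
      have hPr : P (Finset.Icc 1 (n - m)) r = P (Finset.Icc 1 n) r :=
        (P_subset r (Finset.Icc_subset_Icc_right (Nat.sub_le n m)) hrsub).symm
      unfold bc
      rw [hcount, hPr, ← hcons, P_cons hm r]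
      have hP := P_ne_zero (Finset.Icc 1 n) r
      have hmf : (m.factorial : ℚ) ≠ 0 := Nat.cast_ne_zero.2 m.factorial_ne_zero
      have hc1 : ((Multiset.count m r + 1 : ℕ) : ℚ) ≠ 0 := Nat.cast_ne_zero.2 (Nat.succ_ne_zero _)
      rw [Nat.cast_choose ℚ hmn]
      have hnmf : ((n - m).factorial : ℚ) ≠ 0 := Nat.cast_ne_zero.2 (Nat.factorial_ne_zero _)
      field_simp
  · refine Finset.sum_eq_zero fun p hp => ?_
    have : (Multiset.toFinsupp p.parts) m = 0 := by
      rw [Multiset.toFinsupp_apply, Multiset.count_eq_zero]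
      exact (Finset.mem_filter.1 hp).2
    simp [this]
lemma sum_counts (n : ℕ) (p : Nat.Partition n) :
    ∑ m ∈ Finset.Icc 1 n, m * Multiset.count m p.parts = n := by
  have h1 : ∑ m ∈ Finset.Icc 1 n, m * Multiset.count m p.parts
      = ∑ m ∈ p.parts.toFinset, m * Multiset.count m p.parts := by
    refine (Finset.sum_subset (fun x hx => mem_Icc_of_mem_parts (Multiset.mem_toFinset.1 hx))
      fun x _ hx => ?_).symm
    rw [Multiset.count_eq_zero.2 (fun h => hx (Multiset.mem_toFinset.2 h)), mul_zero]
  rw [h1]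
  have h2 := congrArg Multiset.sum (Multiset.toFinset_sum_count_nsmul_eq p.parts)
  rw [Multiset.sum_sum] at h2
  have h3 : ∑ x ∈ p.parts.toFinset, (Multiset.count x p.parts • ({x} : Multiset ℕ)).sum = n := by
    rw [h2, p.parts_sum]
  refine Eq.trans ?_ h3
  refine Finset.sum_congr rfl fun m _ => ?_
  rw [Multiset.nsmul_singleton, Multiset.sum_replicate, smul_eq_mul, mul_comm]

lemma grading (n : ℕ) :
    ∑ m ∈ Finset.Icc 1 n, C ((m : ℚ)) * (X m * pderiv m (BellPoly n))
      = C ((n : ℚ)) * BellPoly n := by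
  rw [bell_eq]
  have hXm : ∀ (m : ℕ) (e : ℕ →₀ ℕ) (b : ℚ),
      (X m : MvPolynomial ℕ ℚ) * monomial e b = monomial (Finsupp.single m 1 + e) b := by
    intro m e b
    rw [X, monomial_mul, one_mul]
  simp only [map_sum, Finset.mul_sum]
  rw [Finset.sum_comm]
  refine Finset.sum_congr rfl fun p _ => ?_
  simp only [pderiv_monomial, hXm, C_mul_monomial]
  have key : ∀ m ∈ Finset.Icc 1 n,
      monomial (Finsupp.single m 1 + (Multiset.toFinsupp p.parts - Finsupp.single m 1))
        ((m : ℚ) * (bc n p * ((Multiset.toFinsupp p.parts) m : ℚ)))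
      = monomial (Multiset.toFinsupp p.parts)
          (((m * Multiset.count m p.parts : ℕ) : ℚ) * bc n p) := by
    intro m _
    rcases Nat.eq_zero_or_pos (Multiset.count m p.parts) with h0 | h0
    · have : (Multiset.toFinsupp p.parts) m = 0 := h0
      rw [this, h0]
      simp
    · have hle : Finsupp.single m 1 ≤ Multiset.toFinsupp p.parts := by
        rw [Finsupp.single_le_iff]
        exact h0
      rw [add_tsub_cancel_of_le hle]
      have h4 : (Multiset.toFinsupp p.parts) m = Multiset.count m p.parts := rfl
      rw [h4]
      push_cast
      congr 1
      ring
  rw [Finset.sum_congr rfl key, ← map_sum, ← Finset.sum_mul, ← Nat.cast_sum, sum_counts]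

lemma bell_rec (n : ℕ) :
    BellPoly (n + 1)
      = ∑ m ∈ Finset.Icc 1 (n + 1), C ((n.choose (m - 1) : ℚ)) * (X m * BellPoly (n + 1 - m)) := by
  have hC : (C (((n : ℚ) + 1)) : MvPolynomial ℕ ℚ) ≠ 0 := by
    rw [Ne, C_eq_zero]
    positivity
  apply mul_left_cancel₀ hC
  have hg := grading (n + 1)
  push_cast at hg
  rw [← hg, Finset.mul_sum]
  refine Finset.sum_congr rfl fun m hm => ?_
  obtain ⟨hm1, hmn⟩ := Finset.mem_Icc.1 hm
  rw [pderiv_bell hm]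
  have hid : (m : ℚ) * ((n + 1).choose m : ℚ) = ((n : ℚ) + 1) * (n.choose (m - 1) : ℚ) := by
    have h5 : (n + 1) * n.choose (m - 1) = (n + 1).choose m * m := by
      simpa [Nat.succ_eq_add_one, show m - 1 + 1 = m from by omega]
        using Nat.add_one_mul_choose_eq n (m - 1)
    have h6 := congrArg (fun k : ℕ => (k : ℚ)) h5
    push_cast at h6
    linear_combination -h6
  calc C ((m : ℚ)) * (X m * (C (((n + 1).choose m : ℚ)) * BellPoly (n + 1 - m)))
      = C ((m : ℚ) * ((n + 1).choose m : ℚ)) * (X m * BellPoly (n + 1 - m)) := by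
        rw [map_mul]; ring
    _ = C (((n : ℚ) + 1)) * (C ((n.choose (m - 1) : ℚ)) * (X m * BellPoly (n + 1 - m))) := by
        rw [hid, map_mul]; ring
lemma fact_ne {k : ℕ} : ((k.factorial : ℚ)) ≠ 0 := Nat.cast_ne_zero.2 k.factorial_ne_zero

lemma pderiv2 {n i j : ℕ} (h1 : 1 ≤ j) (hji : j < i) (hin : i ≤ n) :
    pderiv j (pderiv (i - j) (BellPoly n))
      = C ((n.choose (i - j) : ℚ)) * (C (((n - (i - j)).choose j : ℚ)) * BellPoly (n - i)) := by
  rw [pderiv_bell (by rw [Finset.mem_Icc]; omega), pderiv_C_mul,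
    pderiv_bell (by rw [Finset.mem_Icc]; omega),
    show n - (i - j) - j = n - i from by omega]

lemma pderiv2_zero {n i j : ℕ} (h1 : 1 ≤ j) (hji : j < i) (hin : n < i) :
    pderiv j (pderiv (i - j) (BellPoly n)) = 0 := by
  by_cases h : i - j ≤ n ∧ 1 ≤ i - j
  · rw [pderiv_bell (by rw [Finset.mem_Icc]; omega), pderiv_C_mul,
      pderiv_bell_of_not_mem (by rw [Finset.mem_Icc]; omega), mul_zero]
  · rw [pderiv_bell_of_not_mem (by rw [Finset.mem_Icc]; omega), map_zero]

lemma coef1 {n i j : ℕ} (h2 : 2 ≤ i) (hin : i ≤ n + 1) (hj : 1 ≤ j) (hji : j < i) :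
    ((i - 1).factorial : ℚ) / (((j - 1).factorial : ℚ) * ((i - j - 1).factorial : ℚ))
        * ((n.choose (i - 1) : ℚ))
      = (n.factorial : ℚ) /
          (((j - 1).factorial : ℚ) * ((i - j - 1).factorial : ℚ) * ((n + 1 - i).factorial : ℚ)) := by
  rw [Nat.cast_choose ℚ (show i - 1 ≤ n from by omega), show n - (i - 1) = n + 1 - i from by omega]
  field_simp

lemma coef2 {n m l : ℕ} (hm1 : 1 ≤ m) (hmn : m ≤ n) (hl : 1 ≤ l) (hln : l ≤ n + 1 - m) :
    (((n + 1 - m) * n.choose (m - 1) : ℕ) : ℚ) * (((n - m).choose (l - 1) : ℕ) : ℚ)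
      = (n.factorial : ℚ) /
          (((m - 1).factorial : ℚ) * ((l - 1).factorial : ℚ) * ((n + 1 - m - l).factorial : ℚ)) := by
  push_cast
  rw [Nat.cast_choose ℚ (show m - 1 ≤ n from by omega),
    Nat.cast_choose ℚ (show l - 1 ≤ n - m from by omega),
    show n - (m - 1) = n + 1 - m from by omega,
    show n - m - (l - 1) = n + 1 - m - l from by omega]
  have hfs : ((n + 1 - m).factorial : ℚ) = (n + 1 - m : ℕ) * ((n - m).factorial : ℚ) := by
    rw [show n + 1 - m = (n - m) + 1 from by omega, Nat.factorial_succ]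
    push_cast
    ring
  rw [hfs]
  have h1 : ((n + 1 - m : ℕ) : ℚ) ≠ 0 := Nat.cast_ne_zero.2 (by omega)
  field_simp

lemma coef3 {n i j : ℕ} (h2 : 2 ≤ i) (hin : i ≤ n) (hj : 1 ≤ j) (hji : j < i) :
    ((j.factorial : ℚ) * ((i - j).factorial : ℚ)) / (i.factorial : ℚ)
        * ((n.choose (i - j) : ℚ)) * (((n - (i - j)).choose j : ℚ))
      = ((n.choose i : ℚ)) := by
  rw [Nat.cast_choose ℚ (show i - j ≤ n from by omega),
    Nat.cast_choose ℚ (show j ≤ n - (i - j) from by omega),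
    Nat.cast_choose ℚ (show i ≤ n from hin),
    show n - (i - j) - j = n - i from by omega]
  field_simp

/-- canonical quadratic term -/
noncomputable def v (n a b : ℕ) : MvPolynomial ℕ ℚ :=
  C ((n.factorial : ℚ) /
      (((a - 1).factorial : ℚ) * ((b - 1).factorial : ℚ) * ((n + 1 - a - b).factorial : ℚ))) *
    (X a * (X b * BellPoly (n + 1 - a - b)))

lemma term1_eq {n i j : ℕ} (h2 : 2 ≤ i) (hin : i ≤ n + 1) (hj1 : 1 ≤ j) (hji : j < i) :
    C (((i - 1).factorial : ℚ) / (((j - 1).factorial : ℚ) * ((i - j - 1).factorial : ℚ))) *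
        X j * X (i - j) * pderiv (i - 1) (BellPoly n)
      = v n j (i - j) := by
  rw [pderiv_bell (show i - 1 ∈ Finset.Icc 1 n by rw [Finset.mem_Icc]; omega)]
  unfold v
  rw [show n - (i - 1) = n + 1 - j - (i - j) from by omega,
    show (i - j - 1) = ((i - j) - 1) from rfl,
    show n + 1 - j - (i - j) = n + 1 - i from by omega, ← coef1 h2 hin hj1 hji, map_mul]
  ring

lemma term1'_eq {n m l : ℕ} (hm1 : 1 ≤ m) (hmn : m ≤ n) (hl1 : 1 ≤ l) (hl : l ≤ n - m + 1) :
    C ((((n - m + 1) * n.choose (m - 1) : ℕ) : ℚ)) *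
        (X m * (C (((n - m).choose (l - 1) : ℚ)) * (X l * BellPoly (n - m + 1 - l))))
      = v n m l := by
  unfold v
  rw [show n - m + 1 = n + 1 - m from by omega,
    ← coef2 hm1 hmn hl1 (show l ≤ n + 1 - m from by omega)]
  push_cast
  simp only [map_mul]
  ring

lemma quad (n : ℕ) :
    ∑ x ∈ (Finset.Icc 2 (n + 1)).sigma (fun i => Finset.Ico 1 i), v n x.2 (x.1 - x.2)
      = ∑ y ∈ (Finset.Icc 1 n).sigma (fun m => Finset.Icc 1 (n - m + 1)), v n y.1 y.2 := by
  refine Finset.sum_nbij' (fun x => ⟨x.2, x.1 - x.2⟩) (fun y => ⟨y.1 + y.2, y.1⟩)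
    (fun x hx => ?_) (fun y hy => ?_) (fun x hx => ?_) (fun y hy => ?_) (fun x hx => rfl)
  · simp only [Finset.mem_sigma, Finset.mem_Icc, Finset.mem_Ico] at hx ⊢
    omega
  · simp only [Finset.mem_sigma, Finset.mem_Icc, Finset.mem_Ico] at hy ⊢
    omega
  · obtain ⟨x1, x2⟩ := x
    simp only [Finset.mem_sigma, Finset.mem_Icc, Finset.mem_Ico] at hx
    have h : x2 + (x1 - x2) = x1 := by omega
    simp [h]
  · obtain ⟨y1, y2⟩ := y
    simp only [Finset.mem_sigma, Finset.mem_Icc] at hy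
    have h : y1 + y2 - y1 = y2 := by omega
    simp [h]

end BellAux

open Finset BellAux

/-- For every `n ≥ 1`, the complete Bell polynomials satisfy
`n·B_{n+1} = Σ_{i≥2} Σ_{j=1}^{i-1} ((i-1)!/((j-1)!·(i-j-1)!))·x_j·x_{i-j}·∂B_n/∂x_{i-1}
 + Σ_{i≥2} Σ_{j=1}^{i-1} (j!·(i-j)!/i!)·x_{i+1}·∂²B_n/∂x_j∂x_{i-j}
 + Σ_{i≥2} x_i·∂B_n/∂x_{i-1}`. -/
theorem bellPoly_recurrence :
    ∀ n : ℕ, 1 ≤ n →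
      C (n : ℚ) * BellPoly (n + 1) =
        (∑ᶠ i : ℕ, ∑ j ∈ Finset.Ico 1 i,
          C (((i - 1).factorial : ℚ) /
              (((j - 1).factorial : ℚ) * ((i - j - 1).factorial : ℚ))) *
            X j * X (i - j) * pderiv (i - 1) (BellPoly n))
        + (∑ᶠ i : ℕ, ∑ j ∈ Finset.Ico 1 i,
          C (((j.factorial : ℚ) * ((i - j).factorial : ℚ)) / (i.factorial : ℚ)) *
            X (i + 1) * pderiv j (pderiv (i - j) (BellPoly n)))
        + (∑ᶠ (i : ℕ) (_ : 2 ≤ i), X i * pderiv (i - 1) (BellPoly n)) := by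
  intro n hn
  classical
  -- the third sum
  have h3 : (∑ᶠ (i : ℕ) (_ : 2 ≤ i), X i * pderiv (i - 1) (BellPoly n))
      = ∑ k ∈ Finset.Icc 2 (n + 1),
          C ((n.choose (k - 1) : ℚ)) * (X k * BellPoly (n + 1 - k)) := by
    rw [finsum_eq_finset_sum_of_support_subset _ (s := Finset.Icc 2 (n + 1)) ?_]
    · refine Finset.sum_congr rfl fun i hi => ?_
      rw [Finset.mem_Icc] at hi
      rw [finsum_eq_if, if_pos (show 2 ≤ i by omega),
        pderiv_bell (show i - 1 ∈ Finset.Icc 1 n by rw [Finset.mem_Icc]; omega),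
        show n - (i - 1) = n + 1 - i from by omega]
      ring
    · intro i hi
      simp only [Function.mem_support] at hi
      by_contra hmem
      simp only [Finset.coe_Icc, Set.mem_Icc, not_and_or, not_le] at hmem
      apply hi
      rw [finsum_eq_if]
      split_ifs with h2
      · rw [pderiv_bell_of_not_mem (show i - 1 ∉ Finset.Icc 1 n by
          rw [Finset.mem_Icc]; omega), mul_zero]
      · rfl
  -- the first sum
  have h1 : (∑ᶠ i : ℕ, ∑ j ∈ Finset.Ico 1 i,
        C (((i - 1).factorial : ℚ) /
            (((j - 1).factorial : ℚ) * ((i - j - 1).factorial : ℚ))) *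
          X j * X (i - j) * pderiv (i - 1) (BellPoly n))
      = ∑ m ∈ Finset.Icc 1 (n + 1),
          C ((((n + 1 - m) * n.choose (m - 1) : ℕ) : ℚ)) * (X m * BellPoly (n + 1 - m)) := by
    rw [finsum_eq_finset_sum_of_support_subset _ (s := Finset.Icc 2 (n + 1)) ?_]
    · have step1 : ∀ i ∈ Finset.Icc 2 (n + 1),
          (∑ j ∈ Finset.Ico 1 i,
            C (((i - 1).factorial : ℚ) /
                (((j - 1).factorial : ℚ) * ((i - j - 1).factorial : ℚ))) *
              X j * X (i - j) * pderiv (i - 1) (BellPoly n))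
          = ∑ j ∈ Finset.Ico 1 i, v n j (i - j) := by
        intro i hi
        rw [Finset.mem_Icc] at hi
        refine Finset.sum_congr rfl fun j hj => ?_
        rw [Finset.mem_Ico] at hj
        exact term1_eq hi.1 hi.2 hj.1 hj.2
      rw [Finset.sum_congr rfl step1, Finset.sum_sigma', quad n, ← Finset.sum_sigma']
      -- now show the double sum equals the single sum over `Icc 1 (n+1)`
      refine Eq.trans (Finset.sum_congr rfl fun m hm => ?_)
        (Finset.sum_subset (Finset.Icc_subset_Icc_right (by omega)) fun m hm hm' => ?_)
      · rw [Finset.mem_Icc] at hm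
        rw [show n + 1 - m = n - m + 1 from by omega, bell_rec (n - m), Finset.mul_sum,
          Finset.mul_sum]
        refine Finset.sum_congr rfl fun l hl => ?_
        rw [Finset.mem_Icc] at hl
        rw [show n - m + 1 - l = n - m + 1 - l from rfl]
        exact (term1'_eq hm.1 hm.2 hl.1 hl.2).symm
      · rw [Finset.mem_Icc] at hm hm'
        rw [show n + 1 - m = 0 from by omega]
        simp
    · intro i hi
      simp only [Function.mem_support] at hi
      by_contra hmem
      simp only [Finset.coe_Icc, Set.mem_Icc, not_and_or, not_le] at hmem
      apply hi
      rcases hmem with hlt | hgt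
      · rw [Finset.Ico_eq_empty (by omega), Finset.sum_empty]
      · refine Finset.sum_eq_zero fun j hj => ?_
        rw [pderiv_bell_of_not_mem (show i - 1 ∉ Finset.Icc 1 n by
          rw [Finset.mem_Icc]; omega), mul_zero]
  -- the second sum
  have h2 : (∑ᶠ i : ℕ, ∑ j ∈ Finset.Ico 1 i,
        C (((j.factorial : ℚ) * ((i - j).factorial : ℚ)) / (i.factorial : ℚ)) *
          X (i + 1) * pderiv j (pderiv (i - j) (BellPoly n)))
      = ∑ k ∈ Finset.Icc 2 (n + 1),
          C ((((k - 2) * n.choose (k - 1) : ℕ) : ℚ)) * (X k * BellPoly (n + 1 - k)) := by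
    rw [finsum_eq_finset_sum_of_support_subset _ (s := Finset.Icc 2 n) ?_]
    · have step : ∀ i ∈ Finset.Icc 2 n,
          (∑ j ∈ Finset.Ico 1 i,
            C (((j.factorial : ℚ) * ((i - j).factorial : ℚ)) / (i.factorial : ℚ)) *
              X (i + 1) * pderiv j (pderiv (i - j) (BellPoly n)))
          = C ((((i - 1) * n.choose i : ℕ) : ℚ)) * (X (i + 1) * BellPoly (n - i)) := by
        intro i hi
        rw [Finset.mem_Icc] at hi
        have per : ∀ j ∈ Finset.Ico 1 i,
            C (((j.factorial : ℚ) * ((i - j).factorial : ℚ)) / (i.factorial : ℚ)) *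
              X (i + 1) * pderiv j (pderiv (i - j) (BellPoly n))
            = C ((n.choose i : ℚ)) * (X (i + 1) * BellPoly (n - i)) := by
          intro j hj
          rw [Finset.mem_Ico] at hj
          rw [pderiv2 hj.1 hj.2 hi.2, ← coef3 hi.1 hi.2 hj.1 hj.2]
          simp only [map_mul]
          ring
        rw [Finset.sum_congr rfl per, Finset.sum_const, Nat.card_Ico, nsmul_eq_mul,
          ← MvPolynomial.C_eq_coe_nat, ← mul_assoc, ← map_mul, ← Nat.cast_mul]
      rw [Finset.sum_congr rfl step]
      have reidx : ∑ i ∈ Finset.Icc 2 n,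
            C ((((i - 1) * n.choose i : ℕ) : ℚ)) * (X (i + 1) * BellPoly (n - i))
          = ∑ k ∈ Finset.Ioc 2 (n + 1),
            C ((((k - 2) * n.choose (k - 1) : ℕ) : ℚ)) * (X k * BellPoly (n + 1 - k)) := by
        refine Finset.sum_nbij' (fun i => i + 1) (fun k => k - 1)
          (fun i hi => ?_) (fun k hk => ?_) (fun i hi => rfl) (fun k hk => ?_) (fun i hi => ?_)
        · rw [Finset.mem_Icc] at hi
          simp only [Finset.mem_Ioc]
          omega
        · rw [Finset.mem_Ioc] at hk
          simp only [Finset.mem_Icc]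
          omega
        · rw [Finset.mem_Ioc] at hk
          show k - 1 + 1 = k
          omega
        · rw [Finset.mem_Icc] at hi
          show C ((((i - 1) * n.choose i : ℕ) : ℚ)) * (X (i + 1) * BellPoly (n - i))
              = C ((((i + 1 - 2) * n.choose (i + 1 - 1) : ℕ) : ℚ)) *
                  (X (i + 1) * BellPoly (n + 1 - (i + 1)))
          rw [show i + 1 - 2 = i - 1 from by omega, show i + 1 - 1 = i from rfl,
            show n + 1 - (i + 1) = n - i from by omega]
      rw [reidx]
      rw [← Finset.add_sum_erase _ _ (show 2 ∈ Finset.Icc 2 (n + 1) by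
          rw [Finset.mem_Icc]; omega),
        Finset.Icc_erase_left]
      simp
    · intro i hi
      simp only [Function.mem_support] at hi
      by_contra hmem
      simp only [Finset.coe_Icc, Set.mem_Icc, not_and_or, not_le] at hmem
      apply hi
      rcases hmem with hlt | hgt
      · rw [Finset.Ico_eq_empty (by omega), Finset.sum_empty]
      · refine Finset.sum_eq_zero fun j hj => ?_
        rw [Finset.mem_Ico] at hj
        rw [pderiv2_zero hj.1 hj.2 hgt, mul_zero]
  -- assemble
  rw [h1, h2, h3, bell_rec n, Finset.mul_sum, add_assoc]
  have split : ∀ m ∈ Finset.Icc 1 (n + 1),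
      C ((n : ℚ)) * (C ((n.choose (m - 1) : ℚ)) * (X m * BellPoly (n + 1 - m)))
      = C ((((n + 1 - m) * n.choose (m - 1) : ℕ) : ℚ)) * (X m * BellPoly (n + 1 - m))
        + C ((((m - 1) * n.choose (m - 1) : ℕ) : ℚ)) * (X m * BellPoly (n + 1 - m)) := by
    intro m hm
    rw [Finset.mem_Icc] at hm
    have harith : ((n + 1 - m) * n.choose (m - 1) : ℕ) + ((m - 1) * n.choose (m - 1) : ℕ)
        = n * n.choose (m - 1) := by
      rw [← add_mul]
      congr 1
      omega
    calc C ((n : ℚ)) * (C ((n.choose (m - 1) : ℚ)) * (X m * BellPoly (n + 1 - m)))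
        = C (((n * n.choose (m - 1) : ℕ) : ℚ)) * (X m * BellPoly (n + 1 - m)) := by
          push_cast
          rw [map_mul]
          ring
      _ = _ := by
          rw [← harith]
          push_cast
          rw [map_add]
          ring
  rw [Finset.sum_congr rfl split, Finset.sum_add_distrib]
  congr 1
  have merge : ∀ k ∈ Finset.Icc 2 (n + 1),
      C ((((k - 2) * n.choose (k - 1) : ℕ) : ℚ)) * (X k * BellPoly (n + 1 - k))
        + C ((n.choose (k - 1) : ℚ)) * (X k * BellPoly (n + 1 - k))
      = C ((((k - 1) * n.choose (k - 1) : ℕ) : ℚ)) * (X k * BellPoly (n + 1 - k)) := by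
    intro k hk
    rw [Finset.mem_Icc] at hk
    have hsum : ((k - 2) * n.choose (k - 1) : ℕ) + n.choose (k - 1)
        = (k - 1) * n.choose (k - 1) := by
      rw [show k - 1 = (k - 2) + 1 from by omega, add_mul, one_mul]
    rw [← hsum]
    push_cast
    rw [map_add]
    ring
  rw [← Finset.sum_add_distrib, Finset.sum_congr rfl merge]
  refine (Finset.sum_subset (Finset.Icc_subset_Icc_left (by omega)) fun m hm hm' => ?_).symm
  rw [Finset.mem_Icc] at hm
  rw [Finset.mem_Icc] at hm'
  rw [show m - 1 = 0 from by omega]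
  simp
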